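/- Let S ⊆ S' be saturated multiplicatively closed subsets of R. Suppose S is M-splitting and S' \ Ann(M) is compactly S-atomic (as a subset of the R-module R). Let α be one of: irreducible, strongly irreducible, very strongly irreducible, and β one of: primitive, strongly primitive, very strongly primitive. If M is (α, β)-S'-atomic, then M is (α, very strongly primitive)-S-atomic. -/

import Mathlib

namespace FactorizationPaper

variable {R : Type*} [CommRing R]

/-- `S` is a saturated multiplicatively closed subset of `R`:
it contains `1`, is closed under multiplication, and `x*y ∈ S` implies `x ∈ S` and `y ∈ S`. -/
def Saturated (S : Set R) : Prop :=
  1 ∈ S ∧ (∀ x ∈ S, ∀ y ∈ S, x * y ∈ S) ∧ ∀ x y : R, x * y ∈ S → x ∈ S ∧ y ∈ S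

/-- The submonoid of `R` associated to a saturated multiplicatively closed set. -/
def Saturated.submonoid {S : Set R} (hS : Saturated S) : Submonoid R where
  carrier := S
  one_mem' := hS.1
  mul_mem' := fun {a b} ha hb => hS.2.1 a ha b hb

section ElementDefs

variable (S : Set R) {N : Type*} [AddCommGroup N] [Module R N]

/-- `m ∼^S n` : `m` and `n` are S-associates. -/
def SAssoc (m n : N) : Prop := (∃ s ∈ S, m = s • n) ∧ (∃ s ∈ S, n = s • m)

/-- `m ≈^S n` : `m` and `n` are S-strong associates. -/
def SStrongAssoc (m n : N) : Prop := ∃ u : R, IsUnit u ∧ u ∈ S ∧ m = u • n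

/-- `m ≅^S n` : `m` and `n` are S-very strong associates. -/
def SVeryStrongAssoc (m n : N) : Prop :=
  SAssoc S m n ∧ ((m = 0 ∧ n = 0) ∨ ∀ s ∈ S, m = s • n → IsUnit s)

/-- `m` is S-primitive. -/
def SPrimitive (m : N) : Prop := ∀ s ∈ S, ∀ n : N, m = s • n → SAssoc S n m

/-- `m` is S-strongly primitive. -/
def SStronglyPrimitive (m : N) : Prop := ∀ s ∈ S, ∀ n : N, m = s • n → SStrongAssoc S n m

/-- `m` is S-very strongly primitive. -/
def SVeryStronglyPrimitive (m : N) : Prop := ∀ s ∈ S, ∀ n : N, m = s • n → SVeryStrongAssoc S n m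

/-- the three kinds of S-primitivity, indexed by `Fin 3` :
`0` = primitive, `1` = strongly primitive, `2` = very strongly primitive. -/
def PrimOf (k : Fin 3) (m : N) : Prop :=
  match k with
  | 0 => SPrimitive S m
  | 1 => SStronglyPrimitive S m
  | 2 => SVeryStronglyPrimitive S m

/-- `m = s • n` is a compact S-atomic factorization of `m`. -/
def IsCompactFactorization (m : N) (s : R) (n : N) : Prop :=
  s ∈ S ∧ SPrimitive S n ∧ m = s • n

/-- `m = s₁ ⋯ s_k • n` (with the `sᵢ` the members of the list `l`, nonunits in `S`)
is an S-factorization of `m`, of length `l.length`. -/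
def IsSFactorization (m : N) (l : List R) (n : N) : Prop :=
  (∀ s ∈ l, s ∈ S ∧ ¬ IsUnit s) ∧ m = l.prod • n

end ElementDefs

/-- `a ∼ b` : associates in `R` (i.e. S-associates with `S = R`, in `R` as an `R`-module). -/
def Assoc (a b : R) : Prop := SAssoc (Set.univ : Set R) a b

/-- `a ≈ b` : strong associates in `R`. -/
def StrongAssoc (a b : R) : Prop := SStrongAssoc (Set.univ : Set R) a b

/-- `a ≅ b` : very strong associates in `R`. -/
def VeryStrongAssoc (a b : R) : Prop := SVeryStrongAssoc (Set.univ : Set R) a b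

/-- `a` is irreducible. -/
def Irred (a : R) : Prop := ¬ IsUnit a ∧ ∀ b c : R, a = b * c → Assoc a b ∨ Assoc a c

/-- `a` is strongly irreducible. -/
def StrongIrred (a : R) : Prop :=
  ¬ IsUnit a ∧ ∀ b c : R, a = b * c → StrongAssoc a b ∨ StrongAssoc a c

/-- `a` is very strongly irreducible. -/
def VeryStrongIrred (a : R) : Prop :=
  ¬ IsUnit a ∧ ∀ b c : R, a = b * c → VeryStrongAssoc a b ∨ VeryStrongAssoc a c

/-- the three kinds of irreducibility, indexed by `Fin 3` :
`0` = irreducible, `1` = strongly irreducible, `2` = very strongly irreducible. -/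
def IrredOf (k : Fin 3) (a : R) : Prop :=
  match k with
  | 0 => Irred a
  | 1 => StrongIrred a
  | 2 => VeryStrongIrred a

section ElementDefs2

variable (S : Set R) {N : Type*} [AddCommGroup N] [Module R N]

/-- `m = s₁ ⋯ s_k • n` is an S-atomic factorization
(each `sᵢ` irreducible and in `S`, `n` S-primitive). -/
def IsSAtomicFactorization (m : N) (l : List R) (n : N) : Prop :=
  IsSFactorization S m l n ∧ (∀ s ∈ l, Irred s) ∧ SPrimitive S n

/-- an (α, β)-S-factorization: each `sᵢ` is α (a kind of irreducible)
and `n` is S-β (a kind of S-primitive). -/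
def IsABFactorization (kα kβ : Fin 3) (m : N) (l : List R) (n : N) : Prop :=
  IsSFactorization S m l n ∧ (∀ s ∈ l, IrredOf kα s) ∧ PrimOf S kβ n

/-- Isomorphism of S-atomic factorizations: same length, S-associate primitive parts,
and the irreducible parts match up to permutation and associates. -/
def FactorIso (l : List R) (n : N) (l' : List R) (n' : N) : Prop :=
  l.length = l'.length ∧ SAssoc S n n' ∧
    ∃ l'' : List R, l'.Perm l'' ∧ List.Forall₂ Assoc l l''

end ElementDefs2

section SetDefs

variable (S : Set R) {N : Type*} [AddCommGroup N] [Module R N]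

/-- `E ⊆ N` is compactly S-atomic. -/
def CompactlySAtomic (E : Set N) : Prop :=
  ∀ m ∈ E, m ≠ 0 → ∃ s n, IsCompactFactorization S m s n

/-- `E ⊆ N` is semi-S-factorable. -/
def SemiSFactorable (E : Set N) : Prop :=
  CompactlySAtomic S E ∧ ∀ m ∈ E, m ≠ 0 → ∀ s n s' n',
    IsCompactFactorization S m s n → IsCompactFactorization S m s' n' → Assoc s s'

/-- `E ⊆ N` is S-factorable. -/
def SFactorable (E : Set N) : Prop :=
  SemiSFactorable S E ∧ ∀ m ∈ E, m ≠ 0 → ∀ s n s' n',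
    IsCompactFactorization S m s n → IsCompactFactorization S m s' n' → SAssoc S n n'

/-- `S` splits `E ⊆ N`. -/
def Splits (E : Set N) : Prop :=
  SemiSFactorable S E ∧
    ∀ r : R, SPrimitive S r → ∀ m : N, SPrimitive S m →
      r • m ≠ 0 → r • m ∈ E → SPrimitive S (r • m)

end SetDefs

/-- The set of zero divisors of the module `M` in `R`. -/
def ZDiv (R : Type*) [CommRing R] (M : Type*) [AddCommGroup M] [Module R M] : Set R :=
  {r : R | ∃ m : M, m ≠ 0 ∧ r • m = 0}

/-- The annihilator of `M` in `R`, as a set. -/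
def AnnSet (R : Type*) [CommRing R] (M : Type*) [AddCommGroup M] [Module R M] : Set R :=
  {r : R | ∀ m : M, r • m = 0}

/-- The annihilator of `M` in `R`, as an ideal. -/
def AnnIdeal (R : Type*) [CommRing R] (M : Type*) [AddCommGroup M] [Module R M] : Ideal R where
  carrier := AnnSet R M
  zero_mem' := fun m => zero_smul R m
  add_mem' := fun {a b} ha hb m => by
    rw [add_smul, ha m, hb m, add_zero]
  smul_mem' := fun c x hx m => by
    rw [smul_eq_mul, mul_smul, hx m, smul_zero]

section ModuleProps

variable (S : Set R) (N : Type*) [AddCommGroup N] [Module R N]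

/-- `N` is S-présimplifiable. -/
def SPresimplifiable : Prop := ∀ s ∈ S, ∀ m : N, s • m = m → IsUnit s ∨ m = 0

/-- `N` is S-atomic. -/
def SAtomicModule : Prop := ∀ m : N, m ≠ 0 → ∃ l n, IsSAtomicFactorization S m l n

/-- `N` is (α, β)-S-atomic. -/
def ABAtomicModule (kα kβ : Fin 3) : Prop :=
  ∀ m : N, m ≠ 0 → ∃ l n, IsABFactorization S kα kβ m l n

/-- `N` is an S-UFM. -/
def SUFM : Prop := SAtomicModule S N ∧ ∀ m : N, m ≠ 0 → ∀ l n l' n',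
  IsSAtomicFactorization S m l n → IsSAtomicFactorization S m l' n' → FactorIso S l n l' n'

/-- `N` is an S-FFM. -/
def SFFM : Prop := SAtomicModule S N ∧ ∀ m : N, m ≠ 0 →
  ∃ Fs : Set (List R × N), Fs.Finite ∧
    ∀ l n, IsSAtomicFactorization S m l n → ∃ p ∈ Fs, FactorIso S l n p.1 p.2

/-- `N` is an S-BFM. -/
def SBFM : Prop := ∀ m : N, m ≠ 0 → ∃ B : ℕ,
  ∀ l n, IsSFactorization S m l n → l.length ≤ B

/-- `N` is an S-HFM. -/
def SHFM : Prop := SAtomicModule S N ∧ ∀ m : N, m ≠ 0 → ∀ l n l' n',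
  IsSAtomicFactorization S m l n → IsSAtomicFactorization S m l' n' → l.length = l'.length

end ModuleProps

section InE

variable (E : Set R)

/-- `R` is présimplifiable in `E`. -/
def PresimpIn : Prop := ∀ a ∈ E, a ≠ 0 → ¬ IsUnit a → ∀ r : R, a = r * a → IsUnit r ∨ a = 0

/-- `R` is atomic in `E`. -/
def AtomicIn : Prop := ∀ a ∈ E, a ≠ 0 → ¬ IsUnit a →
  ∃ l n, IsSAtomicFactorization (Set.univ : Set R) a l n

/-- `R` has unique factorization in `E`. -/
def UFIn : Prop := AtomicIn E ∧ ∀ a ∈ E, a ≠ 0 → ¬ IsUnit a → ∀ l n l' n',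
  IsSAtomicFactorization (Set.univ : Set R) a l n →
  IsSAtomicFactorization (Set.univ : Set R) a l' n' →
  FactorIso (Set.univ : Set R) l n l' n'

/-- `R` has finite factorization in `E`. -/
def FFIn : Prop := AtomicIn E ∧ ∀ a ∈ E, a ≠ 0 → ¬ IsUnit a →
  ∃ Fs : Set (List R × R), Fs.Finite ∧ ∀ l n,
    IsSAtomicFactorization (Set.univ : Set R) a l n →
      ∃ p ∈ Fs, FactorIso (Set.univ : Set R) l n p.1 p.2

/-- `R` is half factorial in `E`. -/
def HFIn : Prop := AtomicIn E ∧ ∀ a ∈ E, a ≠ 0 → ¬ IsUnit a → ∀ l n l' n',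
  IsSAtomicFactorization (Set.univ : Set R) a l n →
  IsSAtomicFactorization (Set.univ : Set R) a l' n' → l.length = l'.length

/-- `R` has bounded factorization in `E`. -/
def BFIn : Prop := ∀ a ∈ E, a ≠ 0 → ¬ IsUnit a →
  ∃ B : ℕ, ∀ l n, IsSFactorization (Set.univ : Set R) a l n → l.length ≤ B

end InE

/-- The set `T = S⁻¹S'` in the localization `R_S`. -/
def locT {S : Set R} (hS : Saturated S) (S' : Set R) : Set (Localization hS.submonoid) :=
  {x | ∃ s' ∈ S', ∃ t : hS.submonoid, x = Localization.mk s' t}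

section DomainDefs

variable (D : Type*) [CommRing D]

/-- two lists of ring elements agree up to order and associates. -/
def ListAssociated (l l' : List D) : Prop :=
  ∃ l'' : List D, l'.Perm l'' ∧ List.Forall₂ Associated l l''

/-- `D` is atomic: every nonzero nonunit is a finite product of irreducibles. -/
def DomAtomic : Prop := ∀ x : D, x ≠ 0 → ¬ IsUnit x →
  ∃ l : List D, (∀ a ∈ l, Irreducible a) ∧ x = l.prod

/-- `D` is a bounded factorization domain. -/
def DomBFD : Prop := ∀ x : D, x ≠ 0 → ¬ IsUnit x →
  ∃ B : ℕ, ∀ l : List D, (∀ a ∈ l, ¬ IsUnit a) → x = l.prod → l.length ≤ B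

/-- `D` is a half factorial domain. -/
def DomHFD : Prop := DomAtomic D ∧ ∀ x : D, x ≠ 0 → ¬ IsUnit x →
  ∀ l l' : List D, (∀ a ∈ l, Irreducible a) → x = l.prod →
    (∀ a ∈ l', Irreducible a) → x = l'.prod → l.length = l'.length

/-- `D` is a finite factorization domain. -/
def DomFFD : Prop := DomAtomic D ∧ ∀ x : D, x ≠ 0 → ¬ IsUnit x →
  ∃ Fs : Set (List D), Fs.Finite ∧ ∀ l : List D, (∀ a ∈ l, Irreducible a) → x = l.prod →
    ∃ l' ∈ Fs, ListAssociated D l l'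

/-- `D` is a unique factorization domain. -/
def DomUFD : Prop := DomAtomic D ∧ ∀ x : D, x ≠ 0 → ¬ IsUnit x →
  ∀ l l' : List D, (∀ a ∈ l, Irreducible a) → x = l.prod →
    (∀ a ∈ l', Irreducible a) → x = l'.prod → ListAssociated D l l'

end DomainDefs

section AXBXdefs

variable (B : Type*) [CommRing B] (A : Subring B)

/-- The ring `R = A + X·B[X]`, as a subring of `B[X]`. -/
def AXBX : Subring (Polynomial B) where
  carrier := {f | f.coeff 0 ∈ A}
  zero_mem' := by simp only [Set.mem_setOf_eq, Polynomial.coeff_zero]; exact zero_mem A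
  one_mem' := by
    simp only [Set.mem_setOf_eq, Polynomial.coeff_one, if_pos rfl]
    exact one_mem A
  add_mem' := fun {f g} hf hg => by
    simp only [Set.mem_setOf_eq, Polynomial.coeff_add] at *
    exact add_mem hf hg
  neg_mem' := fun {f} hf => by
    simp only [Set.mem_setOf_eq, Polynomial.coeff_neg] at *
    exact neg_mem hf
  mul_mem' := fun {f g} hf hg => by
    simp only [Set.mem_setOf_eq, Polynomial.mul_coeff_zero] at *
    exact mul_mem hf hg

/-- The saturated multiplicatively closed subset `S = (U(B) ∩ A) ∪ {u·Xⁿ : u ∈ U(B), n ≥ 1}`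
of `R = A + X·B[X]`. -/
def Sset : Set (AXBX B A) :=
  {f | (∃ u : B, IsUnit u ∧ u ∈ A ∧ (f : Polynomial B) = Polynomial.C u) ∨
       (∃ u : B, IsUnit u ∧ ∃ n : ℕ, 1 ≤ n ∧
          (f : Polynomial B) = Polynomial.C u * Polynomial.X ^ n)}

/-- The saturated multiplicatively closed subset `S₀ = U(B) ∩ A` of `A`. -/
def S0set : Set A := {a : A | IsUnit (a : B)}

end AXBXdefs


section Statement9Aux

variable {M : Type*} [AddCommGroup M] [Module R M]

private lemma inv_mem_of_sat {S : Set R} (hS : Saturated S) {u : R} (hu : IsUnit u)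
    (_huS : u ∈ S) : ∃ v, v * u = 1 ∧ v ∈ S := by
  obtain ⟨v, hv⟩ := hu.exists_left_inv
  exact ⟨v, hv, (hS.2.2 v u (by rw [hv]; exact hS.1)).1⟩

/-- If `u ∈ S` is a unit and `p` is `S`-primitive then `u • p` is `S`-primitive. -/
private lemma sprim_unit_smul {S : Set R} (hS : Saturated S) {u : R} (hu : IsUnit u)
    (huS : u ∈ S) {p : M} (hp : SPrimitive S p) : SPrimitive S (u • p) := by
  obtain ⟨v, hv, hvS⟩ := inv_mem_of_sat hS hu huS
  intro s hs x hx
  have hpv : p = v • (u • p) := by rw [← mul_smul, hv, one_smul]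
  have hpx : p = (v * s) • x := by rw [mul_smul, ← hx, ← hpv]
  obtain ⟨⟨a, haS, hax⟩, ⟨b, hbS, hbp⟩⟩ := hp (v * s) (hS.2.1 v hvS s hs) x hpx
  constructor
  · exact ⟨a * v, hS.2.1 a haS v hvS, by rw [mul_smul, ← hpv, hax]⟩
  · exact ⟨u * b, hS.2.1 u huS b hbS, by rw [mul_smul, ← hbp]⟩

/-- Semi-S-factorability: any compact cofactor of a nonzero S-primitive element is a unit. -/
private lemma isUnit_of_compact {S : Set R} (hS : Saturated S)
    (hsplit : Splits S (Set.univ : Set M))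
    {m : M} (hm : m ≠ 0) (hmp : SPrimitive S m) {u : R} (huS : u ∈ S) {p : M}
    (hp : SPrimitive S p) (heq : m = u • p) : IsUnit u := by
  have h := hsplit.1.2 m (Set.mem_univ m) hm 1 m u p ⟨hS.1, hmp, (one_smul R m).symm⟩
    ⟨huS, hp, heq⟩
  obtain ⟨⟨c, -, hc⟩, -⟩ := h
  rw [smul_eq_mul] at hc
  exact ⟨⟨u, c, (by rw [mul_comm]; exact hc.symm), hc.symm⟩, rfl⟩

/-- Under splitting, nonzero S-primitive elements are S-very strongly primitive. -/
private lemma vsp_of_prim {S : Set R} (hS : Saturated S)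
    (hsplit : Splits S (Set.univ : Set M))
    {w : M} (hw : w ≠ 0) (hp : SPrimitive S w) : SVeryStronglyPrimitive S w := by
  intro s hs x hx
  refine ⟨hp s hs x hx, Or.inr fun t ht hxt => ?_⟩
  have hw2 : w = (s * t) • w := by rw [mul_smul, ← hxt]; exact hx
  have := isUnit_of_compact hS hsplit hw hp (hS.2.1 s hs t ht) hp hw2
  exact isUnit_of_mul_isUnit_right this

/-- Any `β`-kind of S-primitivity implies S-primitivity (uses saturation). -/
private lemma primOf_sprim {S : Set R} (hS : Saturated S) {kβ : Fin 3} {n : M}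
    (h : PrimOf S kβ n) : SPrimitive S n := by
  fin_cases kβ
  · exact h
  · intro s hs x hx
    obtain ⟨u, hu, huS, hxu⟩ := h s hs x hx
    obtain ⟨v, hv, hvS⟩ := inv_mem_of_sat hS hu huS
    exact ⟨⟨u, huS, hxu⟩, ⟨v, hvS, by rw [hxu, ← mul_smul, hv, one_smul]⟩⟩
  · exact fun s hs x hx => (h s hs x hx).1

/-- Any `α`-kind of irreducibility yields the plain associate splitting property. -/
private lemma irred_split {kα : Fin 3} {a : R} (h : IrredOf kα a) :
    ∀ b c : R, a = b * c → Assoc a b ∨ Assoc a c := by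
  have strong : ∀ x y : R, StrongAssoc x y → Assoc x y := by
    rintro x y ⟨u, hu, -, hxy⟩
    obtain ⟨v, hv⟩ := hu.exists_left_inv
    exact ⟨⟨u, trivial, hxy⟩, ⟨v, trivial, by
      rw [hxy, smul_eq_mul, smul_eq_mul, ← mul_assoc, hv, one_mul]⟩⟩
  fin_cases kα
  · exact h.2
  · intro b c hbc
    rcases h.2 b c hbc with h' | h'
    · exact Or.inl (strong _ _ h')
    · exact Or.inr (strong _ _ h')
  · intro b c hbc
    rcases h.2 b c hbc with h' | h'
    · exact Or.inl h'.1
    · exact Or.inr h'.1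

/-- An S'-primitive nonzero element of `M` is S-primitive. -/
private lemma sprim_of_s'prim {S S' : Set R} (hS : Saturated S) (_hS' : Saturated S')
    (hSS' : S ⊆ S') (hsplit : Splits S (Set.univ : Set M))
    (hcompact : CompactlySAtomic S (S' \ AnnSet R M)) {n : M} (hn : n ≠ 0)
    (hp' : SPrimitive S' n) : SPrimitive S n := by
  intro s hs x hx
  have hx0 : x ≠ 0 := fun h => hn (by rw [hx, h, smul_zero])
  obtain ⟨t, p, htS, hpprim, hxp⟩ := hsplit.1.1 x (Set.mem_univ x) hx0
  have hp0 : p ≠ 0 := fun h => hx0 (by rw [hxp, h, smul_zero])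
  have hstS : s * t ∈ S := hS.2.1 s hs t htS
  have hnp : n = (s * t) • p := by rw [mul_smul, ← hxp]; exact hx
  obtain ⟨⟨a, haS', hap⟩, -⟩ := hp' (s * t) (hSS' hstS) p hnp
  have hamem : a ∈ S' \ AnnSet R M := ⟨haS', fun hann => hp0 (by rw [hap, hann n])⟩
  have ha0 : a ≠ 0 := fun h => hp0 (by rw [hap, h, zero_smul])
  obtain ⟨τ, ρ, hτS, hρprim, haeq⟩ := hcompact a hamem ha0
  rw [smul_eq_mul] at haeq
  have hscal : a * (s * t) = τ * (s * t) * ρ := by rw [haeq]; ring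
  have key : p = (τ * (s * t)) • (ρ • p) := by
    calc p = a • n := hap
      _ = (a * (s * t)) • p := by rw [hnp, ← mul_smul]
      _ = (τ * (s * t)) • (ρ • p) := by rw [hscal, mul_smul]
  have hρp0 : ρ • p ≠ 0 := fun h => hp0 (by rw [key, h, smul_zero])
  have hρpprim : SPrimitive S (ρ • p) :=
    hsplit.2 ρ hρprim p hpprim hρp0 (Set.mem_univ _)
  have hunit : IsUnit (τ * (s * t)) :=
    isUnit_of_compact hS hsplit hp0 hpprim (hS.2.1 τ hτS _ hstS) hρpprim key
  have hsu : IsUnit s := isUnit_of_mul_isUnit_left (isUnit_of_mul_isUnit_right hunit)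
  obtain ⟨v, hv, hvS⟩ := inv_mem_of_sat hS hsu hs
  exact ⟨⟨v, hvS, by rw [hx, ← mul_smul, hv, one_smul]⟩, ⟨s, hs, hx⟩⟩

/-- Case B: an irreducible element of `S' \ Ann(M)` not in `S` multiplies
S-primitive elements to S-primitive elements. -/
private lemma sprim_smul_of_irred {S S' : Set R} (hS : Saturated S) (hS' : Saturated S')
    (_hSS' : S ⊆ S') (hsplit : Splits S (Set.univ : Set M))
    (hcompact : CompactlySAtomic S (S' \ AnnSet R M))
    {s : R} (hsS' : s ∈ S') (hsnS : s ∉ S)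
    (hirr : ∀ b c : R, s = b * c → Assoc s b ∨ Assoc s c)
    {w : M} (hwprim : SPrimitive S w) (hsw : s • w ≠ 0) : SPrimitive S (s • w) := by
  have hsann : s ∈ S' \ AnnSet R M := ⟨hsS', fun h => hsw (h w)⟩
  have hs0 : s ≠ 0 := fun h => hsw (by rw [h, zero_smul])
  obtain ⟨t, r, htS, hrprim, hstr⟩ := hcompact s hsann hs0
  rw [smul_eq_mul] at hstr
  rcases hirr t r hstr with h | h
  · obtain ⟨-, b, -, hb⟩ := h
    rw [smul_eq_mul] at hb
    exact absurd (hS.2.2 b s (hb ▸ htS)).2 hsnS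
  · obtain ⟨-, c, -, hc⟩ := h
    rw [smul_eq_mul] at hc
    have hrw0 : r • w ≠ 0 := fun h0 => hsw (by rw [hstr, mul_smul, h0, smul_zero])
    have hrwprim : SPrimitive S (r • w) :=
      hsplit.2 r hrprim w hwprim hrw0 (Set.mem_univ _)
    have hrS' : r ∈ S' := (hS'.2.2 t r (hstr ▸ hsS')).2
    have hcS' : c ∈ S' := (hS'.2.2 c s (hc ▸ hrS')).1
    have hcmem : c ∈ S' \ AnnSet R M :=
      ⟨hcS', fun hann => hrw0 (by rw [hc, mul_smul, hann (s • w)])⟩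
    have hc0 : c ≠ 0 := fun h0 => hrw0 (by rw [hc, h0, zero_mul, zero_smul])
    obtain ⟨τ, ρ, hτS, hρprim, hceq⟩ := hcompact c hcmem hc0
    rw [smul_eq_mul] at hceq
    have hscal : c * s = τ * t * (ρ * r) := by rw [hceq, hstr]; ring
    have key : r • w = (τ * t) • (ρ • (r • w)) := by
      have hsc2 : (τ * t) * ρ * r = c * s := by rw [hscal]; ring
      rw [smul_smul, smul_smul, hsc2, ← hc]
    have hρrw0 : ρ • (r • w) ≠ 0 := fun h0 => hrw0 (by rw [key, h0, smul_zero])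
    have hρrwprim : SPrimitive S (ρ • (r • w)) :=
      hsplit.2 ρ hρprim (r • w) hrwprim hρrw0 (Set.mem_univ _)
    have hunit : IsUnit (τ * t) :=
      isUnit_of_compact hS hsplit hrw0 hrwprim (hS.2.1 τ hτS t htS) hρrwprim key
    have htu : IsUnit t := isUnit_of_mul_isUnit_right hunit
    have : SPrimitive S (t • (r • w)) := sprim_unit_smul hS htu htS hrwprim
    rw [hstr, mul_smul]
    exact this

/-- Main induction: push a list of S'-irreducible factors onto an S-primitive element,
keeping the factors lying in `S` and absorbing the others. -/
private lemma factor_list {S S' : Set R} (hS : Saturated S) (hS' : Saturated S')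
    (hSS' : S ⊆ S') (hsplit : Splits S (Set.univ : Set M))
    (hcompact : CompactlySAtomic S (S' \ AnnSet R M)) :
    ∀ (l : List R) (n : M),
      (∀ s ∈ l, s ∈ S' ∧ ∀ b c : R, s = b * c → Assoc s b ∨ Assoc s c) →
      SPrimitive S n → l.prod • n ≠ 0 →
      ∃ (l' : List R) (w : M), (∀ s ∈ l', s ∈ l ∧ s ∈ S) ∧ SPrimitive S w ∧
        l.prod • n = l'.prod • w := by
  intro l
  induction l with
  | nil => exact fun n _ hn _ => ⟨[], n, by simp, hn, rfl⟩
  | cons s rest ih =>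
    intro n hmem hn hne
    rw [List.prod_cons, mul_smul] at hne
    have hrest0 : rest.prod • n ≠ 0 := fun h => hne (by rw [h, smul_zero])
    obtain ⟨l', w, hl', hw, heq⟩ :=
      ih n (fun x hx => hmem x (List.mem_cons_of_mem s hx)) hn hrest0
    have hswl : s • (List.prod l' • w) ≠ 0 := heq ▸ hne
    have hcomm : s • (List.prod l' • w) = List.prod l' • (s • w) := by
      rw [smul_smul, smul_smul, mul_comm]
    have hsw0 : s • w ≠ 0 := fun h => hswl (by rw [hcomm, h, smul_zero])
    by_cases hsS : s ∈ S
    · refine ⟨s :: l', w, ?_, hw, ?_⟩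
      · intro x hx
        rcases List.mem_cons.mp hx with h | h
        · exact ⟨h ▸ List.mem_cons_self (a := s) (l := rest), h ▸ hsS⟩
        · exact ⟨List.mem_cons_of_mem s (hl' x h).1, (hl' x h).2⟩
      · rw [List.prod_cons, List.prod_cons, mul_smul, mul_smul, heq]
    · have hsprim : SPrimitive S (s • w) :=
        sprim_smul_of_irred hS hS' hSS' hsplit hcompact
          (hmem s (List.mem_cons_self (a := s) (l := rest))).1 hsS
          (hmem s (List.mem_cons_self (a := s) (l := rest))).2 hw hsw0
      refine ⟨l', s • w,
        fun x hx => ⟨List.mem_cons_of_mem s (hl' x hx).1, (hl' x hx).2⟩, hsprim, ?_⟩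
      rw [List.prod_cons, mul_smul, heq, hcomm]

end Statement9Aux

theorem statement9 {R : Type*} [CommRing R] {M : Type*} [AddCommGroup M] [Module R M]
    [Nontrivial M] (S S' : Set R) (hS : Saturated S) (hS' : Saturated S') (hSS' : S ⊆ S')
    (hsplit : Splits S (Set.univ : Set M))
    (hcompact : CompactlySAtomic S (S' \ AnnSet R M)) (kα kβ : Fin 3)
    (hatomic : ABAtomicModule S' M kα kβ) :
    ABAtomicModule S M kα (2 : Fin 3) := by
  intro m hm
  obtain ⟨l, n, ⟨hlmem, heq⟩, hirr, hbeta⟩ := hatomic m hm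
  have hn0 : n ≠ 0 := fun h => hm (by rw [heq, h, smul_zero])
  have hnprim' : SPrimitive S' n := primOf_sprim hS' hbeta
  have hnprim : SPrimitive S n :=
    sprim_of_s'prim hS hS' hSS' hsplit hcompact hn0 hnprim'
  have hne : l.prod • n ≠ 0 := heq ▸ hm
  obtain ⟨l', w, hl', hw, heq'⟩ := factor_list hS hS' hSS' hsplit hcompact l n
    (fun s hs => ⟨(hlmem s hs).1, irred_split (hirr s hs)⟩) hnprim hne
  have hw0 : w ≠ 0 := fun h => hne (by rw [heq', h, smul_zero])
  refine ⟨l', w, ⟨⟨fun s hs => ⟨(hl' s hs).2, (hlmem s (hl' s hs).1).2⟩,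
    by rw [heq, heq']⟩, fun s hs => hirr s (hl' s hs).1, ?_⟩⟩
  exact vsp_of_prim hS hsplit hw0 hw

end FactorizationPaper
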